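/- arXiv:1010.0011 — 4 statements merged into one kernel-verified Lean document; each statement's English description precedes it below -/
import Mathlib

section
/- Let A be a K × N complex matrix whose columns all have unit ℓ2-norm, and let μ = max_{l ≠ m} |a_l^H · a_m| be its coherence, assumed positive. If s is a positive integer with s < (1/2)(1/μ + 1), then any two vectors x_1, x_2 ∈ ℂ^N each having at most s nonzero entries and satisfying A x_1 = A x_2 must be equal; equivalently, every set of 2s columns of A is linearly independent. -/
open Complex Finset

/-- (Tropp's sufficient condition) Let `A` be a `K × N` complex matrix with unit-norm columns and
coherence `μ = max_{l ≠ m} |a_l^H · a_m| > 0`. If `s` is a positive integer with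
`s < (1/2)(1/μ + 1)`, then any two `s`-sparse vectors `x₁, x₂ ∈ ℂ^N` with `A x₁ = A x₂`
are equal. -/
theorem sparse_recovery_of_coherence (K N : ℕ) (A : Matrix (Fin K) (Fin N) ℂ)
    (hcol : ∀ n : Fin N, ∑ k : Fin K, ‖A k n‖ ^ 2 = 1)
    (μ : ℝ)
    (hμub : ∀ l m : Fin N, l ≠ m →
      ‖∑ k : Fin K, (starRingEnd ℂ) (A k l) * A k m‖ ≤ μ)
    (hμmem : ∃ l m : Fin N, l ≠ m ∧
      ‖∑ k : Fin K, (starRingEnd ℂ) (A k l) * A k m‖ = μ)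
    (hμpos : 0 < μ)
    (s : ℕ) (hs : 0 < s) (hsμ : (s : ℝ) < (1 / 2) * (1 / μ + 1))
    (x₁ x₂ : Fin N → ℂ)
    (hx₁ : (Finset.univ.filter fun n => x₁ n ≠ 0).card ≤ s)
    (hx₂ : (Finset.univ.filter fun n => x₂ n ≠ 0).card ≤ s)
    (hAx : A.mulVec x₁ = A.mulVec x₂) :
    x₁ = x₂ := by
  set z : Fin N → ℂ := x₁ - x₂ with hzdef
  have hAz : A.mulVec z = 0 := by
    rw [hzdef, Matrix.mulVec_sub, hAx, sub_self]
  have habs : ∀ a : ℂ, (starRingEnd ℂ) a * a = ((‖a‖ ^ 2 : ℝ) : ℂ) := fun a => by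
    rw [mul_comm, Complex.mul_conj]
    norm_cast
    rw [← Complex.sq_norm]
  set G : Fin N → Fin N → ℂ := fun l m => ∑ k : Fin K, (starRingEnd ℂ) (A k l) * A k m with hG
  have hGll : ∀ l, G l l = 1 := by
    intro l
    have h1 : G l l = ((∑ k : Fin K, ‖A k l‖ ^ 2 : ℝ) : ℂ) := by
      push_cast
      exact Finset.sum_congr rfl fun k _ => by
        have := habs (A k l); push_cast at this ⊢; exact this
    rw [h1, hcol l]; norm_num
  have key : ∑ l, ∑ m, (starRingEnd ℂ) (z l) * z m * G l m = 0 := by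
    have h1 : ∑ l, ∑ m, (starRingEnd ℂ) (z l) * z m * G l m
        = ∑ k, (starRingEnd ℂ) (A.mulVec z k) * (A.mulVec z k) := by
      calc ∑ l, ∑ m, (starRingEnd ℂ) (z l) * z m * G l m
          = ∑ l, ∑ m, ∑ k, ((starRingEnd ℂ) (A k l) * (starRingEnd ℂ) (z l)) * (A k m * z m) := by
            simp only [hG, Finset.mul_sum]
            exact Finset.sum_congr rfl fun l _ => Finset.sum_congr rfl fun m _ =>
              Finset.sum_congr rfl fun k _ => by ring
        _ = ∑ l, ∑ k, ∑ m, ((starRingEnd ℂ) (A k l) * (starRingEnd ℂ) (z l)) * (A k m * z m) :=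
            Finset.sum_congr rfl fun l _ => Finset.sum_comm
        _ = ∑ k, ∑ l, ∑ m, ((starRingEnd ℂ) (A k l) * (starRingEnd ℂ) (z l)) * (A k m * z m) :=
            Finset.sum_comm
        _ = ∑ k, (∑ l, (starRingEnd ℂ) (A k l) * (starRingEnd ℂ) (z l)) * (∑ m, A k m * z m) :=
            Finset.sum_congr rfl fun k _ => (Finset.sum_mul_sum _ _ _ _).symm
        _ = ∑ k, (starRingEnd ℂ) (A.mulVec z k) * (A.mulVec z k) := by
            simp [Matrix.mulVec, dotProduct, map_sum, map_mul]
    rw [h1, hAz]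
    simp
  set S : ℝ := ∑ n, ‖z n‖ ^ 2 with hS
  set T₁ : ℝ := ∑ n, ‖z n‖ with hT₁
  set E : ℂ := ∑ l, ∑ m ∈ Finset.univ.erase l, (starRingEnd ℂ) (z l) * z m * G l m with hE
  have hsplit : (S : ℂ) + E = 0 := by
    rw [← key, hE, hS]
    push_cast
    rw [← Finset.sum_add_distrib]
    apply Finset.sum_congr rfl
    intro l _
    rw [← Finset.add_sum_erase _ _ (Finset.mem_univ l), hGll l, mul_one]
    congr 1
    have := habs (z l); push_cast at this ⊢; exact this.symm
  have hSnonneg : 0 ≤ S := Finset.sum_nonneg fun n _ => sq_nonneg _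
  have hSE : S = ‖E‖ := by
    have h : (S : ℂ) = -E := by linear_combination hsplit
    calc S = |S| := (_root_.abs_of_nonneg hSnonneg).symm
      _ = ‖((S : ℝ) : ℂ)‖ := by rw [Complex.norm_real, Real.norm_eq_abs]
      _ = ‖E‖ := by rw [h, norm_neg]
  have hEbound : ‖E‖ ≤ μ * (T₁ ^ 2 - S) := by
    calc ‖E‖ ≤ ∑ l, ‖∑ m ∈ Finset.univ.erase l,
          (starRingEnd ℂ) (z l) * z m * G l m‖ := norm_sum_le _ _
      _ ≤ ∑ l, ∑ m ∈ Finset.univ.erase l, μ * (‖z l‖ * ‖z m‖) := by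
          apply Finset.sum_le_sum
          intro l _
          refine le_trans (norm_sum_le _ _) (Finset.sum_le_sum ?_)
          intro m hm
          have hlm : l ≠ m := (Finset.ne_of_mem_erase hm).symm
          rw [norm_mul, norm_mul]
          have h1 : ‖(starRingEnd ℂ) (z l)‖ = ‖z l‖ := by simp
          have h2 : ‖z m‖ = ‖z m‖ := rfl
          rw [h1, h2]
          calc ‖z l‖ * ‖z m‖ * ‖G l m‖
              ≤ ‖z l‖ * ‖z m‖ * μ :=
                mul_le_mul_of_nonneg_left (hμub l m hlm) (by positivity)
            _ = μ * (‖z l‖ * ‖z m‖) := by ring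
      _ = μ * (T₁ ^ 2 - S) := by
          have inner : ∀ l : Fin N, ∑ m ∈ Finset.univ.erase l, μ * (‖z l‖ * ‖z m‖)
              = μ * (‖z l‖ * (T₁ - ‖z l‖)) := by
            intro l
            rw [← Finset.mul_sum, ← Finset.mul_sum,
              Finset.sum_erase_eq_sub (Finset.mem_univ l)]
          rw [Finset.sum_congr rfl fun l _ => inner l, ← Finset.mul_sum]
          congr 1
          rw [hS, hT₁]
          have e1 : ∀ l : Fin N, ‖z l‖ * ((∑ n, ‖z n‖) - ‖z l‖)
              = ‖z l‖ * (∑ n, ‖z n‖) - ‖z l‖ ^ 2 := fun l => by ring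
          rw [Finset.sum_congr rfl fun l _ => e1 l, Finset.sum_sub_distrib, ← Finset.sum_mul]
          ring
  set T : Finset (Fin N) := Finset.univ.filter fun n => z n ≠ 0 with hT
  have hTcard : (T.card : ℝ) ≤ 2 * s := by
    have hsub : T ⊆ (Finset.univ.filter fun n => x₁ n ≠ 0) ∪
        (Finset.univ.filter fun n => x₂ n ≠ 0) := by
      intro n hn
      simp only [hT, Finset.mem_filter, Finset.mem_univ, true_and] at hn
      simp only [Finset.mem_union, Finset.mem_filter, Finset.mem_univ, true_and]
      by_contra h
      push_neg at h
      exact hn (by simp [hzdef, h.1, h.2])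
    have h2 := le_trans (le_trans (Finset.card_le_card hsub) (Finset.card_union_le _ _))
      (add_le_add hx₁ hx₂)
    calc (T.card : ℝ) ≤ ((s + s : ℕ) : ℝ) := by exact_mod_cast h2
      _ = 2 * s := by push_cast; ring
  have hCS : T₁ ^ 2 ≤ (T.card : ℝ) * S := by
    have h0 : T₁ = ∑ n ∈ T, ‖z n‖ := by
      rw [hT₁]
      symm
      apply Finset.sum_subset (Finset.filter_subset _ _)
      intro n _ hn
      simp only [hT, Finset.mem_filter, Finset.mem_univ, true_and, not_not] at hn
      simp [hn]
    have h1 : (∑ n ∈ T, ‖z n‖ * 1) ^ 2 ≤ (∑ n ∈ T, ‖z n‖ ^ 2) * ∑ n ∈ T, (1 : ℝ) ^ 2 :=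
      Finset.sum_mul_sq_le_sq_mul_sq T _ _
    simp only [mul_one, one_pow, Finset.sum_const, nsmul_eq_mul] at h1
    have h2 : ∑ n ∈ T, ‖z n‖ ^ 2 ≤ S :=
      Finset.sum_le_sum_of_subset_of_nonneg (Finset.filter_subset _ _)
        (fun n _ _ => sq_nonneg _)
    calc T₁ ^ 2 = (∑ n ∈ T, ‖z n‖) ^ 2 := by rw [h0]
      _ ≤ (∑ n ∈ T, ‖z n‖ ^ 2) * T.card := by simpa using h1
      _ ≤ (T.card : ℝ) * S := by
          rw [mul_comm]
          exact mul_le_mul_of_nonneg_left h2 (Nat.cast_nonneg _)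
  have hmain : S ≤ μ * (2 * s * S - S) := by
    have h0 := hSE ▸ hEbound
    have hstep : T₁ ^ 2 ≤ 2 * s * S :=
      le_trans hCS (mul_le_mul_of_nonneg_right hTcard hSnonneg)
    nlinarith [hμpos.le, hSE ▸ hEbound]
  have hμs : μ * (2 * s - 1) < 1 := by
    have h1 : 2 * (s : ℝ) < 1 / μ + 1 := by linarith
    have h2 : μ * (2 * s) < μ * (1 / μ + 1) := mul_lt_mul_of_pos_left h1 hμpos
    rw [mul_add, mul_one_div, div_self (ne_of_gt hμpos)] at h2
    nlinarith
  have hSzero : S = 0 := by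
    by_contra h
    have hSpos : 0 < S := lt_of_le_of_ne hSnonneg (Ne.symm h)
    nlinarith
  have hz0 : ∀ n, z n = 0 := by
    intro n
    have h1 : ‖z n‖ ^ 2 = 0 :=
      (Finset.sum_eq_zero_iff_of_nonneg
        (fun n (_ : n ∈ Finset.univ) => sq_nonneg ‖z n‖)).mp hSzero n (Finset.mem_univ n)
    have h2 : ‖z n‖ = 0 := by nlinarith [norm_nonneg (z n)]
    exact norm_eq_zero.mp h2
  funext n
  have h := hz0 n
  simp only [hzdef, Pi.sub_apply] at h
  exact sub_eq_zero.mp h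
end

section
/- Fix b_2, b_3, …, b_h ∈ F_{p^m} and consider the K × K submatrix σ of the matrix A of Construction 1 consisting of the K columns whose associated tuples are (b_1, b_2, …, b_h) with b_1 ranging over F_{p^m}. Then σ is a unitary matrix; in particular its K columns form an orthonormal basis of ℂ^K, and any two distinct rows of σ are orthogonal. -/
open Complex Finset

/-- The canonical additive character of a finite field `F` of characteristic `p`:
`χ(y) = exp(2πi · Tr(y) / p) = ω_p^{Tr(y)}`, where `Tr : F → F_p` is the field trace. -/
noncomputable def addChar (p : ℕ) {F : Type*} [Field F] [Fintype F] [Algebra (ZMod p) F]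
    (y : F) : ℂ :=
  Complex.exp (2 * Real.pi * Complex.I * ((Algebra.trace (ZMod p) F y).val : ℂ) / p)

section helpers
variable (p : ℕ) [Fact p.Prime] {F : Type*} [Field F] [Fintype F] [Algebra (ZMod p) F]

lemma exp_nat_mod (n : ℕ) :
    Complex.exp (2 * Real.pi * Complex.I * ((n % p : ℕ) : ℂ) / p) =
    Complex.exp (2 * Real.pi * Complex.I * (n : ℂ) / p) := by
  have hp : (p : ℂ) ≠ 0 := by
    exact_mod_cast (Fact.out : p.Prime).pos.ne'
  conv_rhs => rw [← Nat.div_add_mod n p]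
  set q := n / p with hq
  set rr := n % p with hr
  rw [show (2 * Real.pi * Complex.I * ((p * q + rr : ℕ) : ℂ) / p)
      = ((q : ℤ) : ℂ) * (2 * Real.pi * Complex.I) +
        2 * Real.pi * Complex.I * ((rr : ℕ) : ℂ) / p by
    push_cast
    field_simp
    ]
  rw [Complex.exp_add, Complex.exp_int_mul_two_pi_mul_I, one_mul]

lemma addChar_zero : addChar p (0 : F) = 1 := by
  simp [addChar]

lemma addChar_add (x y : F) : addChar p (x + y) = addChar p x * addChar p y := by
  unfold addChar
  rw [map_add, ZMod.val_add, exp_nat_mod, ← Complex.exp_add]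
  congr 1
  push_cast
  ring

lemma addChar_ne_zero (x : F) : addChar p x ≠ 0 := Complex.exp_ne_zero _

lemma conj_addChar (x : F) : (starRingEnd ℂ) (addChar p x) = addChar p (-x) := by
  have h1 : addChar p x * (starRingEnd ℂ) (addChar p x) = 1 := by
    unfold addChar
    rw [← Complex.exp_conj, ← Complex.exp_add]
    rw [show (starRingEnd ℂ) (2 * Real.pi * Complex.I *
        (((Algebra.trace (ZMod p) F x).val : ℕ) : ℂ) / p)
        = -(2 * Real.pi * Complex.I * (((Algebra.trace (ZMod p) F x).val : ℕ) : ℂ) / p) by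
      simp only [map_div₀, map_mul, Complex.conj_I, Complex.conj_natCast,
        Complex.conj_ofReal, map_ofNat]
      ring]
    simp
  have h2 : addChar p x * addChar p (-x) = 1 := by
    rw [← addChar_add, add_neg_cancel, addChar_zero]
  exact mul_left_cancel₀ (addChar_ne_zero p x) (h1.trans h2.symm)

lemma addChar_ne_one {x : F} (hx : Algebra.trace (ZMod p) F x ≠ 0) : addChar p x ≠ 1 := by
  intro hcontra
  rw [addChar, Complex.exp_eq_one_iff] at hcontra
  obtain ⟨n, hn⟩ := hcontra
  have hp : (p : ℂ) ≠ 0 := by exact_mod_cast (Fact.out : p.Prime).pos.ne'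
  have hI : (2 * (Real.pi : ℂ) * Complex.I) ≠ 0 := by
    simp [Real.pi_ne_zero, Complex.I_ne_zero, Complex.ofReal_ne_zero]
  set v : ℕ := (Algebra.trace (ZMod p) F x).val with hv
  have hvp : (v : ℂ) / p = n := mul_left_cancel₀ hI (by
    rw [show (2 * (Real.pi : ℂ) * Complex.I) * ((v : ℂ) / p)
        = 2 * Real.pi * Complex.I * (v : ℂ) / p by ring, hn]
    ring)
  have hval : (v : ℂ) = (n : ℂ) * p := (div_eq_iff hp).mp hvp
  have hint : (v : ℤ) = n * p := by exact_mod_cast hval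
  have hdvd : (p : ℤ) ∣ (v : ℤ) := ⟨n, by rw [hint]; ring⟩
  have hpv : p ∣ v := Int.natCast_dvd_natCast.mp hdvd
  have hvlt : v < p := ZMod.val_lt _
  have hvne : v ≠ 0 := by
    simpa [hv, ZMod.val_eq_zero] using hx
  exact absurd (Nat.le_of_dvd (Nat.pos_of_ne_zero hvne) hpv) (not_le.mpr hvlt)

lemma sum_addChar_eq_zero (t : F) (ht : t ≠ 0) :
    ∑ x : F, addChar p (t * x) = 0 := by
  have hS : ∑ x : F, addChar p x = 0 := by
    obtain ⟨y, hy⟩ : ∃ y : F, Algebra.trace (ZMod p) F y ≠ 0 := by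
      obtain ⟨y, hy⟩ := Algebra.trace_surjective (ZMod p) F 1
      exact ⟨y, by rw [hy]; exact one_ne_zero⟩
    have hshift : ∑ x : F, addChar p (y + x) = ∑ x : F, addChar p x :=
      Fintype.sum_equiv (Equiv.addLeft y) _ _ (fun x => rfl)
    have : (addChar p y - 1) * ∑ x : F, addChar p x = 0 := by
      have : addChar p y * ∑ x : F, addChar p x = ∑ x : F, addChar p x := by
        rw [Finset.mul_sum]
        simpa [addChar_add] using hshift
      linear_combination this
    rcases mul_eq_zero.mp this with h | h
    · exact absurd (sub_eq_zero.mp h) (addChar_ne_one p hy)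
    · exact h
  calc ∑ x : F, addChar p (t * x) = ∑ x : F, addChar p x :=
        Fintype.sum_equiv (Equiv.mulLeft₀ t ht) _ _ (fun x => rfl)
    _ = 0 := hS

end helpers

/-- `b_i` associated to the digit `u_i`: `b = 0` if `u = 0`, and `b = α^(u-1)` if `u ≥ 1`. -/
noncomputable def bOf {F : Type*} [Field F] (α : F) (u : ℕ) : F :=
  if u = 0 then 0 else α ^ (u - 1)

/-- Fix `b₂, …, b_h ∈ F_{p^m}` and let `σ` be the `K × K` submatrix of the Construction 1
matrix consisting of the `K` columns whose tuples are `(b₁, b₂, …, b_h)` with `b₁` ranging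
over `F_{p^m}` (i.e. `b₁ = bOf α u₁` with `u₁` ranging over `{0, …, K−1}`). Then `σ` is
unitary: its columns form an orthonormal basis of `ℂ^K` and its rows are orthonormal. -/
theorem construction1_submatrix_unitary
    (p m h d : ℕ) [Fact p.Prime] (hodd : Odd p) (hm : 0 < m) (hh : 1 < h)
    (K N : ℕ) (hK : K = p ^ m) (hN : N = K ^ h)
    (F : Type*) [Field F] [Fintype F] [Algebra (ZMod p) F]
    (hcard : Fintype.card F = p ^ m)
    (α : F) (hα : ∀ x : F, x ≠ 0 → ∃ j : ℕ, α ^ j = x)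
    (r : ℕ → ℕ) (hd : h ≤ d) (hr1 : r 1 = 1) (hrh : r h = d)
    (hrmono : StrictMonoOn r (Set.Icc 1 h))
    (hrgcd : ∀ i ∈ Finset.Icc 1 h, Nat.gcd (r i) p = 1)
    (A : Matrix (Fin K) (Fin N) ℂ)
    (hA : ∀ (k : Fin K) (n : Fin N), A k n =
      if (k : ℕ) = 0 then ((Real.sqrt K : ℂ))⁻¹
      else ((Real.sqrt K : ℂ))⁻¹ * addChar p (∑ i ∈ Finset.Icc 1 h,
        bOf α ((n : ℕ) / K ^ (i - 1) % K) * α ^ (r i * ((k : ℕ) - 1))))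
    (b : ℕ → F) (σ : Matrix (Fin K) (Fin K) ℂ)
    (hσ : ∀ (k u₁ : Fin K), σ k u₁ =
      if (k : ℕ) = 0 then ((Real.sqrt K : ℂ))⁻¹
      else ((Real.sqrt K : ℂ))⁻¹ * addChar p (bOf α (u₁ : ℕ) * α ^ (r 1 * ((k : ℕ) - 1)) +
        ∑ i ∈ Finset.Icc 2 h, b i * α ^ (r i * ((k : ℕ) - 1)))) :
    σ ∈ Matrix.unitaryGroup (Fin K) ℂ := by
  classical
  have hp : p.Prime := Fact.out
  have hp3 : 3 ≤ p := by
    rcases hodd with ⟨k, hk⟩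
    have := hp.two_le
    omega
  have hK1 : 1 < K := by
    rw [hK]
    calc 1 < p := by omega
      _ ≤ p ^ m := Nat.le_self_pow hm.ne' p
  haveI : NeZero K := ⟨by omega⟩
  -- α ≠ 0
  have hα0 : α ≠ 0 := by
    intro h0
    have hall : ∀ x : F, x = 0 ∨ x = 1 := by
      intro x
      by_cases hx : x = 0
      · exact Or.inl hx
      · obtain ⟨j, hj⟩ := hα x hx
        cases j with
        | zero => exact Or.inr (by simpa using hj.symm)
        | succ j =>
          exfalso
          rw [h0, zero_pow (Nat.succ_ne_zero j)] at hj
          exact hx hj.symm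
    have hsub : (Finset.univ : Finset F) ⊆ {0, 1} := fun x _ => by
      rcases hall x with h | h <;> simp [h]
    have h1 := Finset.card_le_card hsub
    have h01 : ({0, 1} : Finset F).card ≤ 2 :=
      (Finset.card_insert_le _ _).trans (by simp)
    rw [Finset.card_univ, hcard] at h1
    have : 3 ≤ p ^ m := le_trans hp3 (Nat.le_self_pow hm.ne' p)
    omega
  set αu : Fˣ := Units.mk0 α hα0 with hαu
  have hgen : ∀ x : Fˣ, x ∈ Subgroup.zpowers αu := by
    intro x
    obtain ⟨j, hj⟩ := hα (x : F) x.ne_zero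
    refine ⟨(j : ℤ), ?_⟩
    show αu ^ (j : ℤ) = x
    rw [zpow_natCast]
    ext
    rw [Units.val_pow_eq_pow_val]
    exact hj
  have horderu : orderOf αu = K - 1 := by
    rw [orderOf_eq_card_of_forall_mem_zpowers hgen, Nat.card_eq_fintype_card,
      Fintype.card_units, hcard, hK]
  -- power injectivity below K - 1
  have hpowinj : ∀ a b : ℕ, a < K - 1 → b < K - 1 → α ^ a = α ^ b → a = b := by
    intro a bb ha hb he
    have heu : αu ^ a = αu ^ bb := by
      ext
      rw [Units.val_pow_eq_pow_val, Units.val_pow_eq_pow_val]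
      exact he
    exact pow_injOn_Iio_orderOf (by rw [horderu]; exact ha) (by rw [horderu]; exact hb) heu
  -- injectivity of bOf on Fin K
  have binj : ∀ u u' : Fin K, bOf α (u : ℕ) = bOf α (u' : ℕ) → u = u' := by
    intro u u' heq
    have hu := u.isLt
    have hu' := u'.isLt
    simp only [bOf] at heq
    by_cases h1 : (u : ℕ) = 0 <;> by_cases h2 : (u' : ℕ) = 0
    · exact Fin.ext (by omega)
    · rw [if_pos h1, if_neg h2] at heq
      exact absurd heq.symm (pow_ne_zero _ hα0)
    · rw [if_neg h1, if_pos h2] at heq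
      exact absurd heq (pow_ne_zero _ hα0)
    · rw [if_neg h1, if_neg h2] at heq
      have := hpowinj _ _ (by omega) (by omega) heq
      exact Fin.ext (by omega)
  -- constants
  set c : ℂ := ((Real.sqrt K : ℂ))⁻¹ with hc
  have hstarc : star c = c := by
    simp [hc, Complex.star_def, map_inv₀, Complex.conj_ofReal]
  have hKC : (K : ℂ) ≠ 0 := by
    exact_mod_cast (by omega : K ≠ 0)
  have hcc : c * c = (K : ℂ)⁻¹ := by
    rw [hc, ← mul_inv, ← Complex.ofReal_mul, Real.mul_self_sqrt (Nat.cast_nonneg K)]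
    push_cast
    ring
  have star_addChar : ∀ x : F, star (addChar p x) = addChar p (-x) := fun x =>
    conj_addChar p x
  rw [Matrix.mem_unitaryGroup_iff']
  ext u u'
  rw [Matrix.mul_apply, Matrix.one_apply]
  have hterm : ∀ k : Fin K, (star σ) u k * σ k u' =
      if (k : ℕ) = 0 then (K : ℂ)⁻¹
      else (K : ℂ)⁻¹ * addChar p ((bOf α (u' : ℕ) - bOf α (u : ℕ)) * α ^ ((k : ℕ) - 1)) := by
    intro k
    rw [Matrix.star_apply, hσ, hσ]
    by_cases hk : (k : ℕ) = 0
    · rw [if_pos hk, if_pos hk, if_pos hk, hstarc, hcc]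
    · rw [if_neg hk, if_neg hk, if_neg hk, star_mul', star_addChar, hstarc,
        mul_mul_mul_comm, hcc, ← addChar_add]
      congr 2
      rw [hr1]
      simp only [one_mul]
      ring
  rw [Finset.sum_congr rfl (fun k _ => hterm k)]
  by_cases huu : u = u'
  · subst huu
    rw [if_pos rfl]
    simp only [sub_self, zero_mul, addChar_zero, mul_one, ite_self]
    rw [Finset.sum_const, Finset.card_univ, Fintype.card_fin, nsmul_eq_mul]
    field_simp
  · rw [if_neg huu]
    set t : F := bOf α (u' : ℕ) - bOf α (u : ℕ) with htdef
    have ht : t ≠ 0 := sub_ne_zero.mpr (fun he => huu ((binj u' u he).symm))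
    rw [← Finset.add_sum_erase _ _ (Finset.mem_univ (0 : Fin K))]
    rw [if_pos (show ((0 : Fin K) : ℕ) = 0 from rfl)]
    have hstep : ∑ k ∈ Finset.univ.erase (0 : Fin K),
        (if (k : ℕ) = 0 then (K : ℂ)⁻¹ else (K : ℂ)⁻¹ * addChar p (t * α ^ ((k : ℕ) - 1)))
        = (K : ℂ)⁻¹ * ∑ x ∈ (Finset.univ : Finset F).erase 0, addChar p (t * x) := by
      rw [Finset.mul_sum]
      refine Finset.sum_bij (fun k _ => α ^ ((k : ℕ) - 1)) ?_ ?_ ?_ ?_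
      · intro k hk
        exact Finset.mem_erase.mpr ⟨pow_ne_zero _ hα0, Finset.mem_univ _⟩
      · intro k1 h1 k2 h2 he
        have hk1 : (k1 : ℕ) ≠ 0 := fun hv => (Finset.mem_erase.mp h1).1 (Fin.ext hv)
        have hk2 : (k2 : ℕ) ≠ 0 := fun hv => (Finset.mem_erase.mp h2).1 (Fin.ext hv)
        have e1 := k1.isLt
        have e2 := k2.isLt
        have := hpowinj _ _ (by omega) (by omega) he
        exact Fin.ext (by omega)
      · intro x hx
        obtain ⟨j, hj⟩ := hα x (Finset.mem_erase.mp hx).1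
        have hKm1 : 0 < K - 1 := by omega
        refine ⟨⟨j % (K - 1) + 1, by have := Nat.mod_lt j hKm1; omega⟩,
          Finset.mem_erase.mpr ⟨?_, Finset.mem_univ _⟩, ?_⟩
        · intro hz
          have : j % (K - 1) + 1 = 0 := by
            simpa [Fin.ext_iff] using hz
          omega
        · show α ^ ((j % (K - 1) + 1) - 1) = x
          have horder : orderOf α = K - 1 := by
            have : orderOf ((αu : Fˣ) : F) = orderOf αu := orderOf_units
            rw [← horderu]
            exact this
          simp only [Nat.add_sub_cancel]
          rw [← horder, pow_mod_orderOf]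
          exact hj
      · intro k hk
        have hk0 : (k : ℕ) ≠ 0 := fun hv => (Finset.mem_erase.mp hk).1 (Fin.ext hv)
        rw [if_neg hk0]
    rw [hstep]
    have hsum : ∑ x ∈ (Finset.univ : Finset F).erase 0, addChar p (t * x) = -1 := by
      have h0 := sum_addChar_eq_zero p t ht
      rw [← Finset.add_sum_erase _ _ (Finset.mem_univ (0 : F))] at h0
      rw [mul_zero, addChar_zero] at h0
      linear_combination h0
    rw [hsum]
    ring
end

section
/- The K × N matrix A of Construction 1 satisfies A A^H = (N/K) · I_K, where A^H is the conjugate transpose of A and I_K is the K × K identity matrix. In particular, A is a tight frame whose redundancy (squared spectral norm) is ρ = ‖A‖² = N/K, and any two distinct rows of A are orthogonal while each row has squared ℓ2-norm N/K. -/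
open Complex Finset

section Aux

lemma zetaPow (p : ℕ) [Fact p.Prime] : Complex.exp (2 * Real.pi * Complex.I / p) ^ p = 1 := by
  have hp0 : (p : ℂ) ≠ 0 := Nat.cast_ne_zero.2 (Fact.out : p.Prime).ne_zero
  rw [← Complex.exp_nat_mul]
  rw [show (p : ℂ) * (2 * Real.pi * Complex.I / p) = 2 * Real.pi * Complex.I by
    field_simp]
  exact Complex.exp_two_pi_mul_I

variable (p : ℕ) [Fact p.Prime] (F : Type*) [Field F] [Fintype F] [Algebra (ZMod p) F]

/-- The bundled version of `addChar` as an `AddChar`. -/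
noncomputable def psiF : AddChar F ℂ :=
  haveI : NeZero p := ⟨(Fact.out : p.Prime).ne_zero⟩
  (AddChar.zmodChar p (zetaPow p)).compAddMonoidHom (Algebra.trace (ZMod p) F).toAddMonoidHom

lemma psiF_apply (y : F) :
    psiF p F y = Complex.exp (2 * Real.pi * Complex.I / p) ^ (Algebra.trace (ZMod p) F y).val := by
  haveI : NeZero p := ⟨(Fact.out : p.Prime).ne_zero⟩
  rfl

lemma addChar_eq_psiF (y : F) : addChar p y = psiF p F y := by
  rw [psiF_apply, addChar, ← Complex.exp_nat_mul]
  congr 1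
  ring

lemma trace_exists_ne_zero : ∃ a : F, Algebra.trace (ZMod p) F a ≠ 0 := by
  haveI : CharP F p := charP_of_injective_algebraMap (algebraMap (ZMod p) F).injective p
  have hrc : ringChar F = p := ringChar.eq F p
  subst hrc
  obtain ⟨b, hb⟩ := FiniteField.trace_to_zmod_nondegenerate F (one_ne_zero (α := F))
  rw [one_mul] at hb
  exact ⟨b, hb⟩

lemma psiF_ne_one : psiF p F ≠ 1 := by
  haveI : NeZero p := ⟨(Fact.out : p.Prime).ne_zero⟩
  obtain ⟨a, ha⟩ := trace_exists_ne_zero p F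
  rw [AddChar.ne_one_iff]
  refine ⟨a, ?_⟩
  rw [psiF_apply]
  have hprim := Complex.isPrimitiveRoot_exp p (Fact.out : p.Prime).ne_zero
  refine hprim.pow_ne_one_of_pos_of_lt ?_ (ZMod.val_lt _)
  exact fun hz => ha ((ZMod.val_eq_zero _).mp hz)

open scoped Classical in
lemma sum_psiF (t : F) :
    ∑ b : F, psiF p F (b * t) = if t = 0 then (Fintype.card F : ℂ) else 0 := by
  classical
  rw [AddChar.sum_mulShift t (AddChar.IsPrimitive.of_ne_one (psiF_ne_one p F))]
  split_ifs <;> simp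

lemma conj_psiF (y : F) : star (psiF p F y) = psiF p F (-y) := by
  haveI : CharP F p := charP_of_injective_algebraMap (algebraMap (ZMod p) F).injective p
  have h : 0 < ringChar F := by rw [ringChar.eq F p]; exact (Fact.out : p.Prime).pos
  rw [← starRingEnd_apply, AddChar.starComp_apply h, AddChar.inv_apply]

lemma psiF_map_sum {ι : Type*} (s : Finset ι) (f : ι → F) :
    psiF p F (∑ i ∈ s, f i) = ∏ i ∈ s, psiF p F (f i) := by
  classical
  induction s using Finset.cons_induction with
  | empty => simp
  | cons a s ha ih => rw [Finset.sum_cons, Finset.prod_cons, AddChar.map_add_eq_mul, ih]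

lemma sum_Icc_one {M : Type*} [AddCommMonoid M] (h : ℕ) (f : ℕ → M) :
    ∑ i ∈ Icc 1 h, f i = ∑ j ∈ range h, f (1 + j) := by
  rw [← Finset.Ico_add_one_right_eq_Icc, Finset.sum_Ico_eq_sum_range]
  simp

end Aux

open scoped Matrix.Norms.L2Operator in
/-- The Construction 1 matrix satisfies `A Aᴴ = (N/K)·I_K`: it is a tight frame with
redundancy `ρ = ‖A‖² = N/K` (so distinct rows are orthogonal and each row has squared
ℓ₂-norm `N/K`). -/
theorem construction1_tight_frame
    (p m h d : ℕ) [Fact p.Prime] (hodd : Odd p) (hm : 0 < m) (hh : 1 < h)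
    (K N : ℕ) (hK : K = p ^ m) (hN : N = K ^ h)
    (F : Type*) [Field F] [Fintype F] [Algebra (ZMod p) F]
    (hcard : Fintype.card F = p ^ m)
    (α : F) (hα : ∀ x : F, x ≠ 0 → ∃ j : ℕ, α ^ j = x)
    (r : ℕ → ℕ) (hd : h ≤ d) (hr1 : r 1 = 1) (hrh : r h = d)
    (hrmono : StrictMonoOn r (Set.Icc 1 h))
    (hrgcd : ∀ i ∈ Finset.Icc 1 h, Nat.gcd (r i) p = 1)
    (A : Matrix (Fin K) (Fin N) ℂ)
    (hA : ∀ (k : Fin K) (n : Fin N), A k n =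
      if (k : ℕ) = 0 then ((Real.sqrt K : ℂ))⁻¹
      else ((Real.sqrt K : ℂ))⁻¹ * addChar p (∑ i ∈ Finset.Icc 1 h,
        bOf α ((n : ℕ) / K ^ (i - 1) % K) * α ^ (r i * ((k : ℕ) - 1))))
    :
    A * A.conjTranspose = ((N : ℂ) / (K : ℂ)) • (1 : Matrix (Fin K) (Fin K) ℂ) ∧
      ‖A‖ ^ 2 = (N : ℝ) / (K : ℝ) := by
  classical
  have hp : p.Prime := Fact.out
  haveI : CharP F p := charP_of_injective_algebraMap (algebraMap (ZMod p) F).injective p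
  have hpne2 : p ≠ 2 := by rintro rfl; simp [Nat.odd_iff] at hodd
  have hp3 : 3 ≤ p := by have := hp.two_le; omega
  have hK0 : 0 < K := hK ▸ pow_pos hp.pos m
  have hKcard : Fintype.card F = K := by rw [hcard, hK]
  have hN0 : 0 < N := hN ▸ pow_pos hK0 h
  -- α is nonzero
  have hα0 : α ≠ 0 := by
    intro h0
    obtain ⟨j, hj⟩ := hα (-1) (neg_ne_zero.mpr one_ne_zero)
    subst h0
    rcases Nat.eq_zero_or_pos j with rfl | hj0
    · rw [pow_zero] at hj
      have h2 : (2 : F) = 0 := by linear_combination hj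
      have hdvd : p ∣ 2 := (CharP.cast_eq_zero_iff F p 2).mp (by exact_mod_cast h2)
      have := Nat.le_of_dvd (by norm_num) hdvd
      omega
    · rw [zero_pow hj0.ne'] at hj
      exact (neg_ne_zero.mpr one_ne_zero) hj.symm
  have hαpow_ne : ∀ a : ℕ, α ^ a ≠ 0 := fun a => pow_ne_zero a hα0
  -- the order of α is K - 1
  set u : Fˣ := Units.mk0 α hα0 with hu
  have hucard : orderOf u = K - 1 := by
    have hall : ∀ x : Fˣ, x ∈ Subgroup.zpowers u := by
      intro x
      obtain ⟨j, hj⟩ := hα x.val x.ne_zero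
      refine ⟨(j : ℤ), Units.ext ?_⟩
      show ((u ^ (j : ℤ) : Fˣ) : F) = (x : F)
      rw [zpow_natCast]
      simpa [hu] using hj
    rw [orderOf_eq_card_of_forall_mem_zpowers hall, Nat.card_eq_fintype_card,
      Fintype.card_units, hKcard]
  have hpowinj : ∀ a b : ℕ, a < K - 1 → b < K - 1 → α ^ a = α ^ b → a = b := by
    intro a b ha hb hab
    have huab : u ^ a = u ^ b := Units.ext (by simpa [hu] using hab)
    exact pow_injOn_Iio_orderOf (by rwa [Set.mem_Iio, hucard]) (by rwa [Set.mem_Iio, hucard]) huab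
  -- bOf gives a bijection Fin K ≃ F
  have hbinj : Function.Injective (fun v : Fin K => bOf α (v : ℕ)) := by
    intro v w hvw
    simp only [bOf] at hvw
    by_cases hv : (v : ℕ) = 0 <;> by_cases hw : (w : ℕ) = 0
    · exact Fin.ext (by omega)
    · rw [if_pos hv, if_neg hw] at hvw; exact absurd hvw.symm (hαpow_ne _)
    · rw [if_neg hv, if_pos hw] at hvw; exact absurd hvw (hαpow_ne _)
    · rw [if_neg hv, if_neg hw] at hvw
      have hvlt := v.isLt
      have hwlt := w.isLt
      have := hpowinj _ _ (by omega) (by omega) hvw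
      exact Fin.ext (by omega)
  have hbbij : Function.Bijective (fun v : Fin K => bOf α (v : ℕ)) :=
    (Fintype.bijective_iff_injective_and_card _).2 ⟨hbinj, by simp [hKcard]⟩
  -- character sums over digit functions
  have hψsum : ∀ g : Fin h → F,
      (∑ uu : Fin h → Fin K, psiF p F (∑ j : Fin h, bOf α ((uu j : ℕ)) * g j))
        = if (∀ j, g j = 0) then ((K : ℂ)) ^ h else 0 := by
    intro g
    have hmap : ∀ uu : Fin h → Fin K, psiF p F (∑ j : Fin h, bOf α ((uu j : ℕ)) * g j)
        = ∏ j : Fin h, psiF p F (bOf α ((uu j : ℕ)) * g j) := fun uu => psiF_map_sum p F _ _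
    simp_rw [hmap]
    have hps := Finset.prod_univ_sum (fun _ : Fin h => (univ : Finset (Fin K)))
      (fun j v => psiF p F (bOf α ((v : ℕ)) * g j))
    rw [Fintype.piFinset_univ] at hps
    rw [← hps]
    have hcol : ∀ j : Fin h, ∑ v ∈ (univ : Finset (Fin K)), psiF p F (bOf α (v : ℕ) * g j)
        = if g j = 0 then (K : ℂ) else 0 := by
      intro j
      rw [Fintype.sum_bijective _ hbbij _ (fun b : F => psiF p F (b * g j)) (fun v => rfl),
        sum_psiF p F (g j), hKcard]
    rw [Finset.prod_congr rfl fun j _ => hcol j]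
    by_cases hall : ∀ j, g j = 0
    · rw [if_pos hall, Finset.prod_congr rfl fun j _ => if_pos (hall j)]
      simp
    · rw [if_neg hall]
      push_neg at hall
      obtain ⟨j0, hj0⟩ := hall
      exact Finset.prod_eq_zero (mem_univ j0) (by rw [if_neg hj0])
  -- digit extraction
  set e : (Fin h → Fin K) ≃ Fin N := finFunctionFinEquiv.trans (finCongr hN.symm) with he
  have hdig : ∀ (uu : Fin h → Fin K) (j : Fin h), ((e uu : ℕ) / K ^ (j : ℕ) % K) = (uu j : ℕ) := by
    intro uu j
    have h1 : ((e uu : Fin N) : ℕ) = ((finFunctionFinEquiv uu : Fin (K ^ h)) : ℕ) := by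
      simp [he]
    rw [h1]
    conv_rhs => rw [← Equiv.symm_apply_apply finFunctionFinEquiv uu]
    rw [finFunctionFinEquiv_symm_apply_val]
  -- main column sum
  have hsum : ∀ t : ℕ → F,
      (∑ n : Fin N, psiF p F (∑ i ∈ Icc 1 h, bOf α ((n : ℕ) / K ^ (i - 1) % K) * t i))
        = if (∀ i ∈ Icc 1 h, t i = 0) then (N : ℂ) else 0 := by
    intro t
    rw [← Equiv.sum_comp e
      (fun n : Fin N => psiF p F (∑ i ∈ Icc 1 h, bOf α ((n : ℕ) / K ^ (i - 1) % K) * t i))]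
    have hre : ∀ uu : Fin h → Fin K,
        (∑ i ∈ Icc 1 h, bOf α ((e uu : ℕ) / K ^ (i - 1) % K) * t i)
          = ∑ j : Fin h, bOf α ((uu j : ℕ)) * t (1 + (j : ℕ)) := by
      intro uu
      rw [sum_Icc_one h (fun i => bOf α ((e uu : ℕ) / K ^ (i - 1) % K) * t i),
        ← Fin.sum_univ_eq_sum_range (fun j => bOf α ((e uu : ℕ) / K ^ ((1 + j) - 1) % K) * t (1 + j))]
      refine Finset.sum_congr rfl fun j _ => ?_
      rw [show (1 + (j : ℕ)) - 1 = (j : ℕ) by omega, hdig uu j]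
    simp_rw [hre]
    rw [hψsum (fun j => t (1 + (j : ℕ)))]
    have hiff : (∀ j : Fin h, t (1 + (j : ℕ)) = 0) ↔ (∀ i ∈ Icc 1 h, t i = 0) := by
      constructor
      · intro hj i hi
        rw [mem_Icc] at hi
        have := hj ⟨i - 1, by omega⟩
        rwa [show 1 + (i - 1) = i by omega] at this
      · intro hi j
        exact hi (1 + (j : ℕ)) (mem_Icc.2 ⟨by omega, by have := j.isLt; omega⟩)
    rw [if_congr hiff rfl rfl]
    congr 1
    rw [hN]
    push_cast
    ring
  -- entries of A via psiF
  set c : Fin K → ℕ → F := fun k i => if (k : ℕ) = 0 then 0 else α ^ (r i * ((k : ℕ) - 1)) with hc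
  have hAk : ∀ (k : Fin K) (n : Fin N), A k n
      = ((Real.sqrt K : ℂ))⁻¹ * psiF p F (∑ i ∈ Icc 1 h,
          bOf α ((n : ℕ) / K ^ (i - 1) % K) * c k i) := by
    intro k n
    rw [hA]
    by_cases hk : (k : ℕ) = 0
    · rw [if_pos hk]
      have hz : (∑ i ∈ Icc 1 h, bOf α ((n : ℕ) / K ^ (i - 1) % K) * c k i) = 0 :=
        Finset.sum_eq_zero fun i _ => by simp [hc, hk]
      rw [hz, AddChar.map_zero_eq_one, mul_one]
    · rw [if_neg hk, addChar_eq_psiF]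
      congr 2
      exact Finset.sum_congr rfl fun i _ => by simp [hc, hk]
  -- squared-norm constant
  have hsqrtK : ((Real.sqrt K : ℂ))⁻¹ * ((Real.sqrt K : ℂ))⁻¹ = (K : ℂ)⁻¹ := by
    rw [← mul_inv, ← Complex.ofReal_mul, Real.mul_self_sqrt (by positivity)]
    norm_num
  -- the main identity
  have hmain : A * A.conjTranspose = ((N : ℂ) / (K : ℂ)) • (1 : Matrix (Fin K) (Fin K) ℂ) := by
    ext k k'
    rw [Matrix.mul_apply]
    have hterm : ∀ n : Fin N, A k n * A.conjTranspose n k'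
        = (K : ℂ)⁻¹ * psiF p F (∑ i ∈ Icc 1 h,
            bOf α ((n : ℕ) / K ^ (i - 1) % K) * (c k i - c k' i)) := by
      intro n
      rw [Matrix.conjTranspose_apply, hAk, hAk, star_mul', conj_psiF]
      have hstar : star ((Real.sqrt K : ℂ))⁻¹ = ((Real.sqrt K : ℂ))⁻¹ := by
        simp
      rw [hstar]
      have hdiff : (∑ i ∈ Icc 1 h, bOf α ((n : ℕ) / K ^ (i - 1) % K) * (c k i - c k' i))
          = (∑ i ∈ Icc 1 h, bOf α ((n : ℕ) / K ^ (i - 1) % K) * c k i)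
            + -(∑ i ∈ Icc 1 h, bOf α ((n : ℕ) / K ^ (i - 1) % K) * c k' i) := by
        rw [← Finset.sum_neg_distrib, ← Finset.sum_add_distrib]
        exact Finset.sum_congr rfl fun i _ => by ring
      rw [hdiff, AddChar.map_add_eq_mul, ← hsqrtK]
      ring
    rw [Finset.sum_congr rfl fun n _ => hterm n, ← Finset.mul_sum,
      hsum (fun i => c k i - c k' i)]
    by_cases hkk : k = k'
    · subst hkk
      rw [if_pos (fun i _ => sub_self _), Matrix.smul_apply, Matrix.one_apply_eq, smul_eq_mul,
        mul_one, inv_mul_eq_div]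
    · have hcond : ¬ (∀ i ∈ Icc 1 h, c k i - c k' i = 0) := by
        intro hall
        have h1mem : (1 : ℕ) ∈ Icc 1 h := mem_Icc.2 ⟨le_refl 1, hh.le⟩
        have h1 : c k 1 = c k' 1 := sub_eq_zero.mp (hall 1 h1mem)
        have hr1' : r 1 * ((k : ℕ) - 1) = (k : ℕ) - 1 := by rw [hr1, one_mul]
        have hr1'' : r 1 * ((k' : ℕ) - 1) = (k' : ℕ) - 1 := by rw [hr1, one_mul]
        simp only [hc, hr1', hr1''] at h1
        by_cases hk : (k : ℕ) = 0 <;> by_cases hk' : (k' : ℕ) = 0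
        · exact hkk (Fin.ext (by omega))
        · rw [if_pos hk, if_neg hk'] at h1; exact hαpow_ne _ h1.symm
        · rw [if_neg hk, if_pos hk'] at h1; exact hαpow_ne _ h1
        · rw [if_neg hk, if_neg hk'] at h1
          have hklt := k.isLt
          have hk'lt := k'.isLt
          have := hpowinj _ _ (by omega) (by omega) h1
          exact hkk (Fin.ext (by omega))
      rw [if_neg hcond, mul_zero, Matrix.smul_apply, Matrix.one_apply_ne hkk, smul_eq_mul,
        mul_zero]
  refine ⟨hmain, ?_⟩
  -- the norm computation
  have hA2 : ‖A‖ ^ 2 = ‖A * A.conjTranspose‖ := by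
    rw [sq, ← Matrix.l2_opNorm_conjTranspose A,
      ← Matrix.l2_opNorm_conjTranspose_mul_self A.conjTranspose,
      Matrix.conjTranspose_conjTranspose]
  rw [hA2, hmain, norm_smul]
  have h1 : ‖(1 : Matrix (Fin K) (Fin K) ℂ)‖ = 1 := by
    haveI : Nonempty (Fin K) := ⟨⟨0, hK0⟩⟩
    haveI : Nontrivial (EuclideanSpace ℂ (Fin K)) := inferInstance
    rw [Matrix.cstar_norm_def, map_one]
    exact norm_one
  rw [h1, mul_one, norm_div]
  simp
end

section
/- (Welch bound) Let K and N be positive integers with N ≥ 2, and let A be a K × N complex matrix whose columns a_0, …, a_{N−1} all have unit ℓ2-norm. Then the coherence μ = max_{0 ≤ l ≠ m ≤ N−1} |a_l^H · a_m| satisfies μ² ≥ (N − K)/(K(N − 1)). -/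
open Complex Finset

/-- (Welch bound) Let `A` be a `K × N` complex matrix (`K, N ≥ 1`, `N ≥ 2`) whose columns all
have unit ℓ₂-norm, with coherence `μ = max_{l ≠ m} |a_l^H · a_m|`. Then
`μ² ≥ (N − K)/(K(N − 1))`. -/
theorem welch_bound (K N : ℕ) (hK : 0 < K) (hN : 2 ≤ N)
    (A : Matrix (Fin K) (Fin N) ℂ)
    (hcol : ∀ n : Fin N, ∑ k : Fin K, ‖A k n‖ ^ 2 = 1)
    (μ : ℝ)
    (hμub : ∀ l m : Fin N, l ≠ m →
      ‖∑ k : Fin K, (starRingEnd ℂ) (A k l) * A k m‖ ≤ μ)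
    (hμmem : ∃ l m : Fin N, l ≠ m ∧
      ‖∑ k : Fin K, (starRingEnd ℂ) (A k l) * A k m‖ = μ) :
    ((N : ℝ) - K) / (K * ((N : ℝ) - 1)) ≤ μ ^ 2 := by
  obtain ⟨l0, m0, hlm0, hμ0⟩ := hμmem
  have hμnn : 0 ≤ μ := hμ0 ▸ norm_nonneg _
  set g : Fin N → Fin N → ℂ := fun l m => ∑ k : Fin K, (starRingEnd ℂ) (A k l) * A k m with hg
  set h : Fin K → Fin K → ℂ := fun k j => ∑ m : Fin N, A k m * (starRingEnd ℂ) (A j m) with hh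
  -- columns have unit normSq
  have hcol' : ∀ n : Fin N, ∑ k : Fin K, Complex.normSq (A k n) = 1 := by
    intro n
    have := hcol n
    simpa [Complex.normSq_eq_norm_sq] using this
  -- the key Gram identity
  have keyC : ∑ l : Fin N, ∑ m : Fin N, g l m * (starRingEnd ℂ) (g l m)
      = ∑ k : Fin K, ∑ j : Fin K, h k j * (starRingEnd ℂ) (h k j) := by
    calc ∑ l : Fin N, ∑ m : Fin N, g l m * (starRingEnd ℂ) (g l m)
        = ∑ l : Fin N, ∑ m : Fin N, ∑ k : Fin K, ∑ j : Fin K,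
            ((starRingEnd ℂ) (A k l) * A j l) * (A k m * (starRingEnd ℂ) (A j m)) := by
          refine Finset.sum_congr rfl fun l _ => Finset.sum_congr rfl fun m _ => ?_
          simp only [hg, map_sum, map_mul, Complex.conj_conj, Finset.sum_mul_sum]
          exact Finset.sum_congr rfl fun k _ => Finset.sum_congr rfl fun j _ => by ring
      _ = ∑ p : Fin N × Fin N, ∑ q : Fin K × Fin K,
            ((starRingEnd ℂ) (A q.1 p.1) * A q.2 p.1) * (A q.1 p.2 * (starRingEnd ℂ) (A q.2 p.2)) := by
          simp only [Fintype.sum_prod_type]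
      _ = ∑ q : Fin K × Fin K, ∑ p : Fin N × Fin N,
            ((starRingEnd ℂ) (A q.1 p.1) * A q.2 p.1) * (A q.1 p.2 * (starRingEnd ℂ) (A q.2 p.2)) := by
          rw [Finset.sum_comm]
      _ = ∑ k : Fin K, ∑ j : Fin K, ∑ l : Fin N, ∑ m : Fin N,
            ((starRingEnd ℂ) (A k l) * A j l) * (A k m * (starRingEnd ℂ) (A j m)) := by
          simp only [Fintype.sum_prod_type]
      _ = ∑ k : Fin K, ∑ j : Fin K,
            (∑ l : Fin N, (starRingEnd ℂ) (A k l) * A j l) *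
              (∑ m : Fin N, A k m * (starRingEnd ℂ) (A j m)) := by
          refine Finset.sum_congr rfl fun k _ => Finset.sum_congr rfl fun j _ => ?_
          rw [Finset.sum_mul_sum]
      _ = ∑ k : Fin K, ∑ j : Fin K, h k j * (starRingEnd ℂ) (h k j) := by
          refine Finset.sum_congr rfl fun k _ => Finset.sum_congr rfl fun j _ => ?_
          rw [mul_comm]
          congr 1
          simp only [hh, map_sum, map_mul, Complex.conj_conj]
  -- real version
  have key : ∑ l : Fin N, ∑ m : Fin N, Complex.normSq (g l m)
      = ∑ k : Fin K, ∑ j : Fin K, Complex.normSq (h k j) := by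
    have : ((∑ l : Fin N, ∑ m : Fin N, Complex.normSq (g l m) : ℝ) : ℂ)
        = ((∑ k : Fin K, ∑ j : Fin K, Complex.normSq (h k j) : ℝ) : ℂ) := by
      push_cast
      simpa only [Complex.mul_conj] using keyC
    exact_mod_cast this
  -- diagonal of h
  have hdiag : ∀ k : Fin K, h k k = ((∑ m : Fin N, Complex.normSq (A k m) : ℝ) : ℂ) := by
    intro k
    push_cast
    exact Finset.sum_congr rfl fun m _ => (Complex.mul_conj _)
  set r : Fin K → ℝ := fun k => ∑ m : Fin N, Complex.normSq (A k m) with hr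
  have hrsum : ∑ k : Fin K, r k = N := by
    rw [hr]
    rw [Finset.sum_comm]
    simp [hcol']
  -- lower bound on S := ∑∑ normSq (h k j)
  have hlow : (N : ℝ) ^ 2 ≤ (K : ℝ) * ∑ k : Fin K, ∑ j : Fin K, Complex.normSq (h k j) := by
    have h1 : (∑ k : Fin K, r k) ^ 2 ≤ (K : ℝ) * ∑ k : Fin K, r k ^ 2 := by
      simpa using sq_sum_le_card_mul_sum_sq (s := Finset.univ) (f := r)
    have h2 : ∑ k : Fin K, r k ^ 2 ≤ ∑ k : Fin K, ∑ j : Fin K, Complex.normSq (h k j) := by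
      refine Finset.sum_le_sum fun k _ => ?_
      have : r k ^ 2 = Complex.normSq (h k k) := by
        rw [hdiag k, Complex.normSq_ofReal, sq]
      rw [this]
      exact Finset.single_le_sum (fun j _ => Complex.normSq_nonneg _) (Finset.mem_univ k)
    calc (N : ℝ) ^ 2 = (∑ k : Fin K, r k) ^ 2 := by rw [hrsum]
      _ ≤ (K : ℝ) * ∑ k : Fin K, r k ^ 2 := h1
      _ ≤ (K : ℝ) * ∑ k : Fin K, ∑ j : Fin K, Complex.normSq (h k j) := by
          exact mul_le_mul_of_nonneg_left h2 (by positivity)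
  -- upper bound on ∑∑ normSq (g l m)
  have hdiagg : ∀ l : Fin N, Complex.normSq (g l l) = 1 := by
    intro l
    have : g l l = ((∑ k : Fin K, Complex.normSq (A k l) : ℝ) : ℂ) := by
      push_cast
      exact Finset.sum_congr rfl fun k _ => by rw [mul_comm]; exact Complex.mul_conj _
    rw [this, hcol' l]
    simp
  have hup : ∑ l : Fin N, ∑ m : Fin N, Complex.normSq (g l m)
      ≤ (N : ℝ) * (1 + ((N : ℝ) - 1) * μ ^ 2) := by
    have hper : ∀ l : Fin N, ∑ m : Fin N, Complex.normSq (g l m) ≤ 1 + ((N : ℝ) - 1) * μ ^ 2 := by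
      intro l
      rw [← Finset.sum_erase_add Finset.univ _ (Finset.mem_univ l), hdiagg l, add_comm]
      gcongr 1 + ?_
      have hcard : ((Finset.univ.erase l).card : ℝ) = (N : ℝ) - 1 := by
        rw [Finset.card_erase_of_mem (Finset.mem_univ l)]
        rw [Finset.card_univ, Fintype.card_fin, Nat.cast_sub (by omega), Nat.cast_one]
      calc ∑ m ∈ Finset.univ.erase l, Complex.normSq (g l m)
          ≤ ∑ m ∈ Finset.univ.erase l, μ ^ 2 := by
            refine Finset.sum_le_sum fun m hm => ?_
            have hne : l ≠ m := (Finset.ne_of_mem_erase hm).symm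
            have habs : ‖g l m‖ ≤ μ := hμub l m hne
            calc Complex.normSq (g l m) = ‖g l m‖ ^ 2 := (Complex.sq_norm _).symm
              _ ≤ μ ^ 2 := by gcongr
        _ = ((N : ℝ) - 1) * μ ^ 2 := by rw [Finset.sum_const, nsmul_eq_mul, hcard]
    calc ∑ l : Fin N, ∑ m : Fin N, Complex.normSq (g l m)
        ≤ ∑ l : Fin N, (1 + ((N : ℝ) - 1) * μ ^ 2) := Finset.sum_le_sum fun l _ => hper l
      _ = (N : ℝ) * (1 + ((N : ℝ) - 1) * μ ^ 2) := by
          rw [Finset.sum_const, nsmul_eq_mul]; simp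
  -- combine
  have hmain : (N : ℝ) ^ 2 ≤ (K : ℝ) * ((N : ℝ) * (1 + ((N : ℝ) - 1) * μ ^ 2)) := by
    calc (N : ℝ) ^ 2 ≤ (K : ℝ) * ∑ k : Fin K, ∑ j : Fin K, Complex.normSq (h k j) := hlow
      _ = (K : ℝ) * ∑ l : Fin N, ∑ m : Fin N, Complex.normSq (g l m) := by rw [key]
      _ ≤ (K : ℝ) * ((N : ℝ) * (1 + ((N : ℝ) - 1) * μ ^ 2)) :=
          mul_le_mul_of_nonneg_left hup (by positivity)
  have hKr : (1 : ℝ) ≤ (K : ℝ) := by exact_mod_cast hK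
  have hNr : (2 : ℝ) ≤ (N : ℝ) := by exact_mod_cast hN
  rw [div_le_iff₀ (by nlinarith)]
  nlinarith [hmain, mul_pos (show (0:ℝ) < K by linarith) (show (0:ℝ) < (N:ℝ) - 1 by linarith)]
end
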